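/- Let T ≥ 1 and N ≥ 0 be natural numbers, and let v : ℕ → ℕ be an age sequence over horizon T, i.e., v(0) ≥ 1 and for every t, either v(t+1) = 1 (an update slot) or v(t+1) = v(t) + 1. If the number of update slots, i.e., the cardinality of {t : t + 1 ≤ T - 1 and v(t+1) = 1}, is at most N, then the total age satisfies ∑_{t=0}^{T-1} v(t) ≥ (T/2)·(1 + T/(N+1)) (as real numbers). Equivalently, the average age (1/T)∑_{t=0}^{T-1} v(t) is at least (1/2)(1 + T/(N+1)). -/

import Mathlib

private lemma sum_succ_real (n : ℕ) : ∑ t ∈ Finset.range n, ((t : ℝ) + 1) = n * (n + 1) / 2 := by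
  induction n with
  | zero => simp
  | succ n ih =>
    rw [Finset.sum_range_succ, ih]
    push_cast
    ring

private lemma arith (L M Nr : ℝ) (hL : 1 ≤ L) (hM : 0 ≤ M) (hN : 1 ≤ Nr) :
    (L + M) / 2 * (1 + (L + M) / (Nr + 1)) ≤ L * (L + 1) / 2 + M / 2 * (1 + M / Nr) := by
  have hN0 : 0 < Nr := by linarith
  have hN1 : 0 < Nr + 1 := by linarith
  have l1 : (L + M) / 2 * (1 + (L + M) / (Nr + 1)) = (L + M) * (Nr + 1 + (L + M)) / (2 * (Nr + 1)) := by
    field_simp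
  have l2 : L * (L + 1) / 2 + M / 2 * (1 + M / Nr) = (L * (L + 1) * Nr + M * (Nr + M)) / (2 * Nr) := by
    field_simp
  rw [l1, l2, div_le_div_iff₀ (by positivity) (by positivity)]
  nlinarith [sq_nonneg (Nr * L - M), mul_pos hN0 hN1, mul_nonneg hM hN0.le,
    mul_nonneg (mul_nonneg hM hM) hN0.le]

private lemma grow (v : ℕ → ℕ) (h0 : 1 ≤ v 0)
    (hstep : ∀ t, v (t + 1) = 1 ∨ v (t + 1) = v t + 1) :
    ∀ t, (∀ u, u < t → v (u + 1) ≠ 1) → t + 1 ≤ v t := by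
  intro t
  induction t with
  | zero => intro _; simpa using h0
  | succ t ih =>
    intro h
    rcases hstep t with h1 | h1
    · exact absurd h1 (h t (Nat.lt_succ_self t))
    · have := ih (fun u hu => h u (hu.trans (Nat.lt_succ_self t)))
      omega

private lemma key : ∀ T : ℕ, ∀ N : ℕ, ∀ v : ℕ → ℕ, 1 ≤ v 0 →
    (∀ t, v (t + 1) = 1 ∨ v (t + 1) = v t + 1) →
    ((Finset.range T).filter (fun t => t + 1 ≤ T - 1 ∧ v (t + 1) = 1)).card ≤ N →
    ((T : ℝ) / 2) * (1 + (T : ℝ) / ((N : ℝ) + 1)) ≤ ∑ t ∈ Finset.range T, (v t : ℝ) := by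
  intro T
  induction T using Nat.strong_induction_on with
  | _ T ih =>
    intro N v h0 hstep hupd
    set S := (Finset.range T).filter (fun t => t + 1 ≤ T - 1 ∧ v (t + 1) = 1) with hS
    rcases S.eq_empty_or_nonempty with hemp | hne
    · -- no updates: v t ≥ t + 1 for t < T
      have hv : ∀ t < T, (t : ℝ) + 1 ≤ (v t : ℝ) := by
        intro t ht
        have : t + 1 ≤ v t := by
          apply grow v h0 hstep
          intro u hu h1
          have : u ∈ S := by
            rw [hS]
            simp only [Finset.mem_filter, Finset.mem_range]
            exact ⟨by omega, by omega, h1⟩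
          rw [hemp] at this
          simp at this
        exact_mod_cast this
      have hsum : ∑ t ∈ Finset.range T, ((t : ℝ) + 1) ≤ ∑ t ∈ Finset.range T, (v t : ℝ) :=
        Finset.sum_le_sum (fun t ht => hv t (Finset.mem_range.mp ht))
      rw [sum_succ_real] at hsum
      refine le_trans ?_ hsum
      have hT0 : (0 : ℝ) ≤ (T : ℝ) := Nat.cast_nonneg T
      have hN1 : (1 : ℝ) ≤ (N : ℝ) + 1 := by
        have : (0 : ℝ) ≤ (N : ℝ) := Nat.cast_nonneg N
        linarith
      have hdiv : (T : ℝ) / ((N : ℝ) + 1) ≤ (T : ℝ) := div_le_self hT0 hN1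
      nlinarith
    · -- there is a first update slot s
      set s := S.min' hne with hsdef
      have hsmem : s ∈ S := S.min'_mem hne
      rw [hS, Finset.mem_filter, Finset.mem_range] at hsmem
      obtain ⟨hsT, hs1, hv1⟩ := hsmem
      have hT1 : 1 ≤ T := by omega
      have hsT' : s + 1 ≤ T := by omega
      -- growth before s
      have hv : ∀ t < s + 1, (t : ℝ) + 1 ≤ (v t : ℝ) := by
        intro t ht
        have : t + 1 ≤ v t := by
          apply grow v h0 hstep
          intro u hu h1
          have hu' : u ∈ S := by
            rw [hS]
            simp only [Finset.mem_filter, Finset.mem_range]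
            exact ⟨by omega, by omega, h1⟩
          have := S.min'_le u hu'
          omega
        exact_mod_cast this
      -- tail
      set T' := T - (s + 1) with hT'def
      set w := fun t => v (s + 1 + t) with hwdef
      have hw0 : 1 ≤ w 0 := by simp [hwdef, hv1]
      have hwstep : ∀ t, w (t + 1) = 1 ∨ w (t + 1) = w t + 1 := by
        intro t
        have := hstep (s + 1 + t)
        simpa [hwdef, show s + 1 + (t + 1) = s + 1 + t + 1 by omega] using this
      have hN1 : 1 ≤ N := by
        have : 1 ≤ S.card := Finset.card_pos.mpr hne
        omega
      -- card bound on tail's update set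
      set S' := (Finset.range T').filter (fun t => t + 1 ≤ T' - 1 ∧ w (t + 1) = 1) with hS'
      have hcard : S'.card ≤ N - 1 := by
        have hsub : S'.card ≤ (S.erase s).card := by
          apply Finset.card_le_card_of_injOn (fun t => t + (s + 1))
          · intro t ht
            rw [Finset.mem_coe, hS', Finset.mem_filter, Finset.mem_range] at ht
            obtain ⟨htT', ht1, hw1⟩ := ht
            simp only [Finset.mem_coe, Finset.mem_erase]
            constructor
            · omega
            · rw [hS, Finset.mem_filter, Finset.mem_range]
              refine ⟨by omega, by omega, ?_⟩
              have : t + (s + 1) + 1 = s + 1 + (t + 1) := by omega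
              rw [this]
              exact hw1
          · intro a _ b _ hab
            simpa using hab
        have : (S.erase s).card = S.card - 1 := by
          rw [Finset.card_erase_of_mem (S.min'_mem hne)]
        omega
      have ihT : T' < T := by omega
      have htail := ih T' ihT (N - 1) w hw0 hwstep (by rw [← hS']; exact hcard)
      have hNcast : ((N - 1 : ℕ) : ℝ) + 1 = (N : ℝ) := by
        have : (N - 1) + 1 = N := by omega
        exact_mod_cast congrArg (Nat.cast : ℕ → ℝ) this
      rw [hNcast] at htail
      -- split sum
      have hsplit : ∑ t ∈ Finset.range T, (v t : ℝ)
          = ∑ t ∈ Finset.range (s + 1), (v t : ℝ) + ∑ t ∈ Finset.range T', (w t : ℝ) := by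
        have : T = (s + 1) + T' := by omega
        rw [this, Finset.sum_range_add]
      have hhead : ((s : ℝ) + 1) * ((s : ℝ) + 1 + 1) / 2 ≤ ∑ t ∈ Finset.range (s + 1), (v t : ℝ) := by
        have := Finset.sum_le_sum (fun t ht => hv t (Finset.mem_range.mp ht))
        rw [sum_succ_real] at this
        push_cast at this ⊢
        linarith
      have hcasts : ((T' : ℕ) : ℝ) = (T : ℝ) - ((s : ℝ) + 1) := by
        have : ((T' : ℕ) : ℝ) = ((T : ℕ) : ℝ) - ((s + 1 : ℕ) : ℝ) := by
          rw [hT'def, Nat.cast_sub hsT']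
        push_cast at this
        linarith
      rw [hsplit]
      have harith := arith ((s : ℝ) + 1) (T' : ℝ) (N : ℝ)
        (by have : (0:ℝ) ≤ (s:ℝ) := Nat.cast_nonneg s; linarith)
        (Nat.cast_nonneg T')
        (by exact_mod_cast hN1)
      have hTsum : (T : ℝ) = ((s : ℝ) + 1) + (T' : ℝ) := by
        rw [hcasts]; ring
      rw [hTsum]
      calc (((s : ℝ) + 1) + (T' : ℝ)) / 2 * (1 + (((s : ℝ) + 1) + (T' : ℝ)) / ((N : ℝ) + 1))
      _ ≤ ((s : ℝ) + 1) * (((s : ℝ) + 1) + 1) / 2 + (T' : ℝ) / 2 * (1 + (T' : ℝ) / (N : ℝ)) := harith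
      _ ≤ ∑ t ∈ Finset.range (s + 1), (v t : ℝ) + ∑ t ∈ Finset.range T', (w t : ℝ) := by
        apply add_le_add
        · convert hhead using 2
        · exact htail

/-- Universal lower bound on the total age of information: any age sequence `v` over
horizon `T` (age resets to `1` at an update slot, otherwise increases by `1`)
with at most `N` update slots has total age at least `(T/2)(1 + T/(N+1))`. -/
theorem stmt_0 (T N : ℕ) (hT : 1 ≤ T) (v : ℕ → ℕ)
    (h0 : 1 ≤ v 0)
    (hstep : ∀ t, v (t + 1) = 1 ∨ v (t + 1) = v t + 1)
    (hupd : ((Finset.range T).filter (fun t => t + 1 ≤ T - 1 ∧ v (t + 1) = 1)).card ≤ N) :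
    ((T : ℝ) / 2) * (1 + (T : ℝ) / ((N : ℝ) + 1)) ≤ ∑ t ∈ Finset.range T, (v t : ℝ) :=
  key T N v h0 hstep hupd
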